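/- Let h(t) = p(t)/q(t) be a nonzero rational function with p(t) ∈ ℤ[t, t^{-1}], q(t) ∈ ℤ[t], q(0) = ±1, and p, q relatively prime, and suppose the Laurent series expansion of h(t) at 0 has nonnegative coefficients a_n. If h(t) has subexponential growth, i.e. limsup_{n→∞} a_n^{1/n} ≤ 1, then every root of q(t) in ℂ is a root of unity. -/

import Mathlib

/-- The power series expansion at `t = 0` of `f(t)/q(t)` over `ℚ`, for `f, q ∈ ℤ[t]`
(meaningful when `q(0) = ±1`, so that `q` is a unit in `ℚ[[t]]`).  The Laurent series
expansion of `h(t) = f(t)/(t^m q(t))` then has coefficients `a_n = coeff (n + m)` of this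
series, for `n ≥ -m`. -/
noncomputable def seriesOf (f q : Polynomial ℤ) : PowerSeries ℚ :=
  Polynomial.coeToPowerSeries.ringHom (f.map (Int.castRingHom ℚ)) *
    (Polynomial.coeToPowerSeries.ringHom (q.map (Int.castRingHom ℚ)))⁻¹

open Filter Finset

lemma seriesOf_key (f q : Polynomial ℤ)
    (hq0 : q.coeff 0 = 1 ∨ q.coeff 0 = -1) :
    (Polynomial.coeToPowerSeries.ringHom (q.map (Int.castRingHom ℚ))) * seriesOf f q =
      Polynomial.coeToPowerSeries.ringHom (f.map (Int.castRingHom ℚ)) := by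
  have hc : PowerSeries.constantCoeff (R := ℚ)
      (Polynomial.coeToPowerSeries.ringHom (q.map (Int.castRingHom ℚ))) ≠ 0 := by
    simp only [Polynomial.coeToPowerSeries.ringHom_apply, Polynomial.coeff_coe,
      ← PowerSeries.coeff_zero_eq_constantCoeff_apply, Polynomial.coeff_map]
    rcases hq0 with h | h <;> simp [h]
  rw [seriesOf, mul_comm (Polynomial.coeToPowerSeries.ringHom (f.map _)), ← mul_assoc,
    PowerSeries.mul_inv_cancel _ hc, one_mul]

lemma conv_eq (f q : Polynomial ℤ) (hq0 : q.coeff 0 = 1 ∨ q.coeff 0 = -1) (n : ℕ) :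
    ∑ kl ∈ Finset.HasAntidiagonal.antidiagonal n,
      ((q.coeff kl.1 : ℚ)) * (PowerSeries.coeff (R := ℚ) kl.2 (seriesOf f q)) = (f.coeff n : ℚ) := by
  have := congrArg (PowerSeries.coeff (R := ℚ) n) (seriesOf_key f q hq0)
  rw [PowerSeries.coeff_mul] at this
  simpa [Polynomial.coeToPowerSeries.ringHom_apply, Polynomial.coeff_coe] using this

/-- real version of the convolution identity, summed over a range -/
lemma conv_eq_real (f q : Polynomial ℤ) (hq0 : q.coeff 0 = 1 ∨ q.coeff 0 = -1) (n : ℕ) :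
    ∑ i ∈ Finset.range (n + 1),
      ((q.coeff i : ℝ)) * ((PowerSeries.coeff (R := ℚ) (n - i) (seriesOf f q) : ℚ) : ℝ)
      = (f.coeff n : ℝ) := by
  have h := conv_eq f q hq0 n
  rw [Finset.Nat.sum_antidiagonal_eq_sum_range_succ
    (f := fun k l => ((q.coeff k : ℚ)) * (PowerSeries.coeff (R := ℚ) l (seriesOf f q)))] at h
  have := congrArg (fun x : ℚ => (x : ℝ)) h
  push_cast at this ⊢
  exact this

lemma coeff_growth_bound (f q : Polynomial ℤ) (hq0 : q.coeff 0 = 1 ∨ q.coeff 0 = -1)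
    (hnn : ∀ k : ℕ, 0 ≤ PowerSeries.coeff (R := ℚ) k (seriesOf f q)) :
    ∃ C R : ℝ, 1 ≤ C ∧ 1 ≤ R ∧
      ∀ n, ((PowerSeries.coeff (R := ℚ) n (seriesOf f q) : ℚ) : ℝ) ≤ C * R ^ n := by
  set a : ℕ → ℝ := fun n => ((PowerSeries.coeff (R := ℚ) n (seriesOf f q) : ℚ) : ℝ) with ha_def
  have ha0 : ∀ n, 0 ≤ a n := fun n => by simp only [ha_def]; exact_mod_cast hnn n
  set C : ℝ := 1 + ∑ k ∈ Finset.range (f.natDegree + 1), |(f.coeff k : ℝ)| with hC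
  set M : ℝ := ∑ i ∈ Finset.range (q.natDegree + 1), |(q.coeff (i + 1) : ℝ)| with hM
  set R : ℝ := 1 + M with hR
  have hM0 : 0 ≤ M := Finset.sum_nonneg fun _ _ => abs_nonneg _
  have hC1 : 1 ≤ C := le_add_of_nonneg_right (Finset.sum_nonneg fun _ _ => abs_nonneg _)
  have hR1 : 1 ≤ R := le_add_of_nonneg_right hM0
  have hfb : ∀ n, |(f.coeff n : ℝ)| ≤ C := by
    intro n
    by_cases hn : n ≤ f.natDegree
    · have : |(f.coeff n : ℝ)| ≤ ∑ k ∈ Finset.range (f.natDegree + 1), |(f.coeff k : ℝ)| :=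
        Finset.single_le_sum (f := fun k => |(f.coeff k : ℝ)|) (fun k _ => abs_nonneg _) (Finset.mem_range.2 (Nat.lt_succ_of_le hn))
      linarith
    · rw [Polynomial.coeff_eq_zero_of_natDegree_lt (by omega)]
      simp only [Int.cast_zero, abs_zero]; linarith
  have hqM : ∀ n : ℕ, ∑ i ∈ Finset.range n, |(q.coeff (i + 1) : ℝ)| ≤ M := by
    intro n
    have h1 : ∑ i ∈ Finset.range n, |(q.coeff (i + 1) : ℝ)|
        ≤ ∑ i ∈ Finset.range (max n (q.natDegree + 1)), |(q.coeff (i + 1) : ℝ)| :=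
      Finset.sum_le_sum_of_subset_of_nonneg
        (Finset.range_subset_range.2 (le_max_left _ _)) (fun _ _ _ => abs_nonneg _)
    have h2 : ∑ i ∈ Finset.range (max n (q.natDegree + 1)), |(q.coeff (i + 1) : ℝ)| = M := by
      rw [hM]
      refine (Finset.sum_subset (Finset.range_subset_range.2 (le_max_right _ _)) ?_).symm
      intro i _ hi
      rw [Finset.mem_range, not_lt] at hi
      rw [Polynomial.coeff_eq_zero_of_natDegree_lt (by omega)]
      simp
    linarith
  refine ⟨C, R, hC1, hR1, ?_⟩
  intro n
  induction n using Nat.strong_induction_on with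
  | _ n ih =>
    -- recurrence: (q.coeff 0) * a n = f n - ∑ i in range n, q (i+1) * a (n - (i+1))
    have hconv := conv_eq_real f q hq0 n
    rw [Finset.sum_range_succ'] at hconv
    have hq0r : ((q.coeff 0 : ℝ)) = 1 ∨ ((q.coeff 0 : ℝ)) = -1 := by
      rcases hq0 with h | h <;> [left; right] <;> rw [h] <;> norm_num
    have han : a n = |(f.coeff n : ℝ) - ∑ i ∈ Finset.range n,
        ((q.coeff (i + 1) : ℝ)) * a (n - (i + 1))| := by
      have h0 : ((q.coeff 0 : ℝ)) * a (n - 0) = (f.coeff n : ℝ) - ∑ i ∈ Finset.range n,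
          ((q.coeff (i + 1) : ℝ)) * a (n - (i + 1)) := by
        rw [eq_sub_iff_add_eq, add_comm]; exact hconv
      rcases hq0r with h | h
      · rw [← h0, h, one_mul, Nat.sub_zero, abs_of_nonneg (ha0 n)]
      · rw [← h0, h, Nat.sub_zero, neg_one_mul, abs_neg, abs_of_nonneg (ha0 n)]
    have hsum : |∑ i ∈ Finset.range n, ((q.coeff (i + 1) : ℝ)) * a (n - (i + 1))|
        ≤ M * (C * R ^ (n - 1)) := by
      calc |∑ i ∈ Finset.range n, ((q.coeff (i + 1) : ℝ)) * a (n - (i + 1))|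
          ≤ ∑ i ∈ Finset.range n, |((q.coeff (i + 1) : ℝ)) * a (n - (i + 1))| :=
            Finset.abs_sum_le_sum_abs _ _
        _ ≤ ∑ i ∈ Finset.range n, |(q.coeff (i + 1) : ℝ)| * (C * R ^ (n - 1)) := by
            refine Finset.sum_le_sum fun i hi => ?_
            rw [Finset.mem_range] at hi
            rw [abs_mul, abs_of_nonneg (ha0 _)]
            refine mul_le_mul_of_nonneg_left ?_ (abs_nonneg _)
            calc a (n - (i + 1)) ≤ C * R ^ (n - (i + 1)) := ih _ (by omega)
              _ ≤ C * R ^ (n - 1) := by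
                  refine mul_le_mul_of_nonneg_left (pow_le_pow_right₀ hR1 (by omega)) (by linarith)
        _ = (∑ i ∈ Finset.range n, |(q.coeff (i + 1) : ℝ)|) * (C * R ^ (n - 1)) := by
            rw [← Finset.sum_mul]
        _ ≤ M * (C * R ^ (n - 1)) := by
            refine mul_le_mul_of_nonneg_right (hqM n) ?_
            positivity
    rcases Nat.eq_zero_or_pos n with rfl | hn
    · show a 0 ≤ C * R ^ 0
      rw [pow_zero, mul_one, han]
      simp only [Finset.range_zero, Finset.sum_empty, sub_zero]
      exact hfb 0
    · have hRn : R ^ n = R ^ (n - 1) * R := by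
        rw [← pow_succ]; congr 1; omega
      have h1R : (1:ℝ) ≤ R ^ (n-1) := one_le_pow₀ hR1
      show a n ≤ C * R ^ n
      calc a n ≤ |(f.coeff n : ℝ)| + |∑ i ∈ Finset.range n,
            ((q.coeff (i + 1) : ℝ)) * a (n - (i + 1))| := by
            rw [han]; exact abs_sub _ _
        _ ≤ C + M * (C * R ^ (n - 1)) := add_le_add (hfb n) hsum
        _ ≤ C * R ^ (n-1) + M * (C * R ^ (n - 1)) := by nlinarith
        _ = C * R ^ n := by rw [hRn]; ring

lemma u_bounded (f q : Polynomial ℤ) (m : ℕ) (hq0 : q.coeff 0 = 1 ∨ q.coeff 0 = -1)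
    (hnn : ∀ k : ℕ, 0 ≤ PowerSeries.coeff (R := ℚ) k (seriesOf f q)) :
    Filter.IsBoundedUnder (· ≤ ·) Filter.atTop
      (fun n : ℕ => ((PowerSeries.coeff (R := ℚ) (n + m) (seriesOf f q) : ℚ) : ℝ) ^ ((n : ℝ)⁻¹)) := by
  obtain ⟨C, R, hC1, hR1, hb⟩ := coeff_growth_bound f q hq0 hnn
  have ha0 : ∀ k, (0:ℝ) ≤ ((PowerSeries.coeff (R := ℚ) k (seriesOf f q) : ℚ) : ℝ) := by
    intro k; exact_mod_cast hnn k
  have hCRm : (0:ℝ) ≤ C * R ^ m := by positivity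
  refine Filter.isBoundedUnder_of ⟨max 1 (max (C * R ^ m) 1 * R), fun n => ?_⟩
  rcases Nat.eq_zero_or_pos n with rfl | hn
  · simp
  · refine le_trans ?_ (le_max_right _ _)
    have hinv0 : (0:ℝ) ≤ (n:ℝ)⁻¹ := by positivity
    have hinv1 : (n:ℝ)⁻¹ ≤ 1 := by
      rw [inv_le_one_iff₀]; right; exact_mod_cast hn
    calc ((PowerSeries.coeff (R := ℚ) (n + m) (seriesOf f q) : ℚ) : ℝ) ^ ((n : ℝ)⁻¹)
        ≤ (C * R ^ (n + m)) ^ ((n : ℝ)⁻¹) :=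
          Real.rpow_le_rpow (ha0 _) (hb _) hinv0
      _ = (C * R ^ m) ^ ((n : ℝ)⁻¹) * (R ^ n) ^ ((n : ℝ)⁻¹) := by
          rw [← Real.mul_rpow hCRm (by positivity)]; ring_nf
      _ = (C * R ^ m) ^ ((n : ℝ)⁻¹) * R := by
          congr 1
          rw [← Real.rpow_natCast R n, ← Real.rpow_mul (by linarith),
            mul_inv_cancel₀ (by exact_mod_cast hn.ne'), Real.rpow_one]
      _ ≤ max (C * R ^ m) 1 * R := by
          refine mul_le_mul_of_nonneg_right ?_ (by linarith)
          rcases le_total (C * R ^ m) 1 with h | h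
          · exact le_trans (Real.rpow_le_one hCRm h hinv0) (le_max_right _ _)
          · exact le_trans (by
              calc (C * R ^ m) ^ ((n : ℝ)⁻¹) ≤ (C * R ^ m) ^ (1:ℝ) :=
                Real.rpow_le_rpow_of_exponent_le h hinv1
                _ = C * R ^ m := Real.rpow_one _) (le_max_left _ _)

lemma eventual_bound (f q : Polynomial ℤ) (m : ℕ) (hq0 : q.coeff 0 = 1 ∨ q.coeff 0 = -1)
    (hnn : ∀ k : ℕ, 0 ≤ PowerSeries.coeff (R := ℚ) k (seriesOf f q))
    (hsub : Filter.limsup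
        (fun n : ℕ => ((PowerSeries.coeff (R := ℚ) (n + m) (seriesOf f q) : ℚ) : ℝ) ^ ((n : ℝ)⁻¹))
        Filter.atTop ≤ 1) {c : ℝ} (hc : 1 < c) :
    ∃ N : ℕ, ∀ k ≥ N, ((PowerSeries.coeff (R := ℚ) k (seriesOf f q) : ℚ) : ℝ) ≤ c ^ k := by
  have ha : ∀ k, (0:ℝ) ≤ ((PowerSeries.coeff (R := ℚ) k (seriesOf f q) : ℚ) : ℝ) := by
    intro k; exact_mod_cast hnn k
  have hev : ∀ᶠ n in Filter.atTop,
      ((PowerSeries.coeff (R := ℚ) (n + m) (seriesOf f q) : ℚ) : ℝ) ^ ((n : ℝ)⁻¹) < c :=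
    Filter.eventually_lt_of_limsup_lt (lt_of_le_of_lt hsub hc) (u_bounded f q m hq0 hnn)
  obtain ⟨N, hN⟩ := Filter.eventually_atTop.mp hev
  refine ⟨N + m + 1, fun k hk => ?_⟩
  set n := k - m with hn
  have hkn : k = n + m := by omega
  have hnN : N ≤ n := by omega
  have hn0 : n ≠ 0 := by omega
  have hun := hN n hnN
  have hu0 : 0 ≤ ((PowerSeries.coeff (R := ℚ) (n + m) (seriesOf f q) : ℚ) : ℝ) ^ ((n : ℝ)⁻¹) :=
    Real.rpow_nonneg (ha _) _
  have hpow : (((PowerSeries.coeff (R := ℚ) (n + m) (seriesOf f q) : ℚ) : ℝ) ^ ((n : ℝ)⁻¹)) ^ n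
      = ((PowerSeries.coeff (R := ℚ) (n + m) (seriesOf f q) : ℚ) : ℝ) := by
    rw [← Real.rpow_natCast (((PowerSeries.coeff (R := ℚ) (n + m) (seriesOf f q) : ℚ) : ℝ) ^ ((n:ℝ)⁻¹)) n,
      ← Real.rpow_mul (ha _), inv_mul_cancel₀ (by exact_mod_cast hn0), Real.rpow_one]
  rw [hkn, ← hpow]
  calc (((PowerSeries.coeff (R := ℚ) (n + m) (seriesOf f q) : ℚ) : ℝ) ^ ((n : ℝ)⁻¹)) ^ n
      ≤ c ^ n := pow_le_pow_left₀ hu0 hun.le n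
    _ ≤ c ^ (n + m) := pow_le_pow_right₀ hc.le (by omega)

lemma summable_a (f q : Polynomial ℤ) (m : ℕ) (hq0 : q.coeff 0 = 1 ∨ q.coeff 0 = -1)
    (hnn : ∀ k : ℕ, 0 ≤ PowerSeries.coeff (R := ℚ) k (seriesOf f q))
    (hsub : Filter.limsup
        (fun n : ℕ => ((PowerSeries.coeff (R := ℚ) (n + m) (seriesOf f q) : ℚ) : ℝ) ^ ((n : ℝ)⁻¹))
        Filter.atTop ≤ 1) {r : ℝ} (hr0 : 0 ≤ r) (hr : r < 1) :
    Summable (fun k : ℕ => ((PowerSeries.coeff (R := ℚ) k (seriesOf f q) : ℚ) : ℝ) * r ^ k) := by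
  have ha : ∀ k, (0:ℝ) ≤ ((PowerSeries.coeff (R := ℚ) k (seriesOf f q) : ℚ) : ℝ) := by
    intro k; exact_mod_cast hnn k
  obtain ⟨c, hc1, hcr⟩ : ∃ c : ℝ, 1 < c ∧ c * r < 1 := by
    rcases eq_or_lt_of_le hr0 with h | h
    · exact ⟨2, by norm_num, by rw [← h]; norm_num⟩
    · refine ⟨(1 + r⁻¹) / 2, ?_, ?_⟩
      · have : 1 < r⁻¹ := (one_lt_inv₀ h).mpr hr
        linarith
      · rw [div_mul_eq_mul_div, add_mul, one_mul, inv_mul_cancel₀ h.ne']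
        linarith
  obtain ⟨N, hN⟩ := eventual_bound f q m hq0 hnn hsub hc1
  refine (summable_nat_add_iff N).1 ?_
  have hg : Summable (fun k : ℕ => (c*r)^(k+N)) := by
    simpa [pow_add] using (summable_geometric_of_lt_one (by positivity) hcr).mul_right ((c*r)^N)
  refine Summable.of_nonneg_of_le (fun k => mul_nonneg (ha _) (pow_nonneg hr0 _))
    (fun k => ?_) hg
  calc ((PowerSeries.coeff (R := ℚ) (k + N) (seriesOf f q) : ℚ) : ℝ) * r ^ (k+N)
      ≤ c ^ (k+N) * r ^ (k+N) :=
        mul_le_mul_of_nonneg_right (hN _ (by omega)) (pow_nonneg hr0 _)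
    _ = (c*r)^(k+N) := (mul_pow c r (k+N)).symm

lemma root_norm_ge (f q : Polynomial ℤ) (m : ℕ)
    (hq0 : q.coeff 0 = 1 ∨ q.coeff 0 = -1)
    (hcop : IsCoprime (f.map (Int.castRingHom ℚ)) (q.map (Int.castRingHom ℚ)))
    (hnn : ∀ k : ℕ, 0 ≤ PowerSeries.coeff (R := ℚ) k (seriesOf f q))
    (hsub : Filter.limsup
        (fun n : ℕ => ((PowerSeries.coeff (R := ℚ) (n + m) (seriesOf f q) : ℚ) : ℝ) ^ ((n : ℝ)⁻¹))
        Filter.atTop ≤ 1) :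
    ∀ z : ℂ, (q.map (Int.castRingHom ℂ)).IsRoot z → 1 ≤ ‖z‖ := by
  intro z hz
  by_contra hlt
  push_neg at hlt
  set a : ℕ → ℂ := fun n => ((PowerSeries.coeff (R := ℚ) n (seriesOf f q) : ℚ) : ℂ) * z ^ n with ha_def
  have hnorm_a : ∀ n, ‖a n‖ = ((PowerSeries.coeff (R := ℚ) n (seriesOf f q) : ℚ) : ℝ) * ‖z‖ ^ n := by
    intro n
    rw [ha_def]
    rw [norm_mul, norm_pow]
    congr 1
    have h1 : ((PowerSeries.coeff (R := ℚ) n (seriesOf f q) : ℚ) : ℂ)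
        = (((PowerSeries.coeff (R := ℚ) n (seriesOf f q) : ℚ) : ℝ) : ℂ) := by push_cast; ring
    rw [h1, Complex.norm_real, Real.norm_eq_abs, abs_of_nonneg (by exact_mod_cast hnn n)]
  have hsa : Summable (fun n => ‖a n‖) := by
    rw [funext hnorm_a]
    exact summable_a f q m hq0 hnn hsub (norm_nonneg z) hlt
  set Q : ℕ → ℂ := fun n => ((q.coeff n : ℤ) : ℂ) * z ^ n with hQ_def
  have hQ0 : ∀ n ∉ Finset.range (q.natDegree + 1), Q n = 0 := by
    intro n hn
    rw [Finset.mem_range, not_lt] at hn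
    simp [hQ_def, Polynomial.coeff_eq_zero_of_natDegree_lt (by omega : q.natDegree < n)]
  have hsQ : Summable fun n => ‖Q n‖ :=
    summable_of_ne_finset_zero (s := Finset.range (q.natDegree + 1))
      (fun n hn => by rw [hQ0 n hn, norm_zero])
  have htQ : ∑' n, Q n = 0 := by
    rw [tsum_eq_sum hQ0]
    have : ∑ n ∈ Finset.range (q.natDegree + 1), Q n = (q.map (Int.castRingHom ℂ)).eval z := by
      rw [Polynomial.eval_eq_sum_range' (n := q.natDegree + 1)
        (Nat.lt_succ_of_le Polynomial.natDegree_map_le) z]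
      exact Finset.sum_congr rfl fun i _ => by rw [hQ_def]; simp [Polynomial.coeff_map]
    rw [this, hz]
  have key := tsum_mul_tsum_eq_tsum_sum_antidiagonal_of_summable_norm hsQ hsa
  rw [htQ, zero_mul] at key
  have hconv : ∀ n : ℕ, ∑ kl ∈ Finset.HasAntidiagonal.antidiagonal n, Q kl.1 * a kl.2
      = ((f.coeff n : ℤ) : ℂ) * z ^ n := by
    intro n
    have h1 : ∀ kl ∈ Finset.HasAntidiagonal.antidiagonal n, Q kl.1 * a kl.2
        = (((q.coeff kl.1 : ℚ) * (PowerSeries.coeff (R := ℚ) kl.2 (seriesOf f q)) : ℚ) : ℂ) * z ^ n := by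
      intro kl hkl
      have hkl' : kl.1 + kl.2 = n := Finset.HasAntidiagonal.mem_antidiagonal.1 hkl
      rw [hQ_def, ha_def]
      push_cast
      rw [← hkl', pow_add]
      ring
    rw [Finset.sum_congr rfl h1, ← Finset.sum_mul, ← Rat.cast_sum, conv_eq f q hq0 n]
    push_cast
    ring
  rw [tsum_congr hconv] at key
  have hf0 : ∀ n ∉ Finset.range (f.natDegree + 1), ((f.coeff n : ℤ) : ℂ) * z ^ n = 0 := by
    intro n hn
    rw [Finset.mem_range, not_lt] at hn
    simp [Polynomial.coeff_eq_zero_of_natDegree_lt (by omega : f.natDegree < n)]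
  have hfz : (f.map (Int.castRingHom ℂ)).eval z = 0 := by
    rw [Polynomial.eval_eq_sum_range' (n := f.natDegree + 1)
      (Nat.lt_succ_of_le Polynomial.natDegree_map_le) z]
    rw [tsum_eq_sum hf0] at key
    have heq : ∑ i ∈ Finset.range (f.natDegree + 1), (f.map (Int.castRingHom ℂ)).coeff i * z ^ i
        = ∑ i ∈ Finset.range (f.natDegree + 1), ((f.coeff i : ℤ) : ℂ) * z ^ i :=
      Finset.sum_congr rfl fun i _ => by simp [Polynomial.coeff_map]
    rw [heq]
    exact key.symm
  -- contradiction with coprimality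
  obtain ⟨u, v, huv⟩ := hcop
  have hcomp : (Rat.castHom ℂ).comp (Int.castRingHom ℚ) = Int.castRingHom ℂ :=
    Subsingleton.elim _ _
  have := congrArg (fun p : Polynomial ℚ => Polynomial.eval z (p.map (Rat.castHom ℂ))) huv
  simp only [Polynomial.map_add, Polynomial.map_mul, Polynomial.map_one, Polynomial.eval_add,
    Polynomial.eval_mul, Polynomial.eval_one, Polynomial.map_map, hcomp] at this
  rw [hfz, hz] at this
  simp at this

lemma root_norm_eq_one (q : Polynomial ℤ) (hq0 : q.coeff 0 = 1 ∨ q.coeff 0 = -1)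
    (hge : ∀ z : ℂ, (q.map (Int.castRingHom ℂ)).IsRoot z → 1 ≤ ‖z‖) :
    (∀ z : ℂ, (q.map (Int.castRingHom ℂ)).IsRoot z → ‖z‖ = 1) ∧
      (q.leadingCoeff = 1 ∨ q.leadingCoeff = -1) := by
  set qc : Polynomial ℂ := q.map (Int.castRingHom ℂ) with hqc
  have hq_ne : q ≠ 0 := by
    intro h; rw [h] at hq0; simp at hq0
  have hinj : Function.Injective (Int.castRingHom ℂ) := Int.cast_injective
  have hqc_ne : qc ≠ 0 := by
    rw [hqc, Ne, Polynomial.map_eq_zero_iff hinj]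
    exact hq_ne
  have hsplit : qc.Splits := IsAlgClosed.splits qc
  have heq := Polynomial.Splits.eq_prod_roots hsplit
  have heval := congrArg (Polynomial.eval 0) heq
  rw [Polynomial.eval_mul, Polynomial.eval_C, Polynomial.eval_multiset_prod,
    Multiset.map_map] at heval
  set P : Multiset ℝ := qc.roots.map fun a => ‖a‖ with hPdef
  have hnorm : (1:ℝ) = ‖qc.leadingCoeff‖ * P.prod := by
    have h1 := congrArg (fun w : ℂ => ‖w‖) heval
    simp only [norm_mul] at h1
    have h2 : ‖(Multiset.map (Polynomial.eval 0 ∘ fun a => Polynomial.X - Polynomial.C a)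
        qc.roots).prod‖ = P.prod := by
      calc ‖(Multiset.map (Polynomial.eval 0 ∘ fun a => Polynomial.X - Polynomial.C a)
            qc.roots).prod‖
          = (Multiset.map (fun a : ℂ => ‖a‖) (Multiset.map
              (Polynomial.eval 0 ∘ fun a => Polynomial.X - Polynomial.C a) qc.roots)).prod :=
            map_multiset_prod (normHom : ℂ →*₀ ℝ).toMonoidHom _
        _ = P.prod := by
            rw [Multiset.map_map, hPdef]
            congr 1
            apply Multiset.map_congr rfl
            intro a _
            simp
    have heval0 : ‖qc.eval 0‖ = 1 := by
      have h0 : qc.eval 0 = ((q.coeff 0 : ℤ) : ℂ) := by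
        simp [hqc, ← Polynomial.coeff_zero_eq_eval_zero, Polynomial.coeff_map]
      rw [h0]
      rcases hq0 with h | h <;> rw [h] <;> norm_num
    rw [← heval0, h1, h2]
  -- facts about P
  have hP1 : ∀ x ∈ P, (1:ℝ) ≤ x := by
    intro x hx
    rw [hPdef, Multiset.mem_map] at hx
    obtain ⟨w, hw, rfl⟩ := hx
    exact hge w (Polynomial.mem_roots'.1 hw).2
  have hPpos : (1:ℝ) ≤ P.prod := Multiset.one_le_prod hP1
  have hL : qc.leadingCoeff = ((q.leadingCoeff : ℤ) : ℂ) := by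
    rw [hqc, Polynomial.leadingCoeff_map_of_injective hinj]
    rfl
  have hLnorm : ‖qc.leadingCoeff‖ = |(q.leadingCoeff : ℝ)| := by
    rw [hL]
    rw [show ((q.leadingCoeff : ℤ) : ℂ) = (((q.leadingCoeff : ℤ) : ℝ) : ℂ) by push_cast; ring]
    rw [Complex.norm_real, Real.norm_eq_abs]
  have hL1 : (1:ℝ) ≤ |(q.leadingCoeff : ℝ)| := by
    have : (1:ℤ) ≤ |q.leadingCoeff| := Int.one_le_abs (by
      simpa [Polynomial.leadingCoeff_eq_zero] using hq_ne)
    calc (1:ℝ) = ((1:ℤ):ℝ) := by norm_num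
      _ ≤ ((|q.leadingCoeff| : ℤ) : ℝ) := by exact_mod_cast this
      _ = |(q.leadingCoeff : ℝ)| := by push_cast; ring
  rw [hLnorm] at hnorm
  constructor
  · intro z hz
    have hzP : ‖z‖ ∈ P := by
      rw [hPdef, Multiset.mem_map]
      exact ⟨z, Polynomial.mem_roots'.2 ⟨hqc_ne, hz⟩, rfl⟩
    have herase : ‖z‖ * (P.erase ‖z‖).prod = P.prod := Multiset.prod_erase hzP
    have herase1 : (1:ℝ) ≤ (P.erase ‖z‖).prod :=
      Multiset.one_le_prod fun x hx => hP1 x (Multiset.mem_of_mem_erase hx)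
    have hz1 : 1 ≤ ‖z‖ := hP1 _ hzP
    nlinarith [hnorm.symm, herase]
  · have habs : |q.leadingCoeff| = 1 := by
      have hle : |(q.leadingCoeff : ℝ)| ≤ 1 := by nlinarith [hnorm.symm]
      have : |(q.leadingCoeff : ℝ)| = 1 := le_antisymm hle hL1
      have h2 : ((|q.leadingCoeff| : ℤ) : ℝ) = 1 := by rw [Int.cast_abs, this]
      exact_mod_cast h2
    exact (abs_eq (by norm_num : (0:ℤ) ≤ 1)).1 habs

open IntermediateField

/-- Let `h(t) = p(t)/q(t)` be a nonzero rational function with `p(t) = f(t)·t^{-m} ∈ ℤ[t,t⁻¹]`,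
`q(t) ∈ ℤ[t]`, `q(0) = ±1`, and `p, q` relatively prime, whose Laurent expansion at `0` has
nonnegative coefficients.  If `h` has subexponential growth, i.e.
`limsup_{n→∞} a_n^{1/n} ≤ 1`, then every complex root of `q(t)` is a root of unity. -/
theorem roots_of_unity_of_subexponential_growth (f q : Polynomial ℤ) (m : ℕ)
    (hf : f ≠ 0)
    (hq0 : q.coeff 0 = 1 ∨ q.coeff 0 = -1)
    (hcop : IsCoprime (f.map (Int.castRingHom ℚ)) (q.map (Int.castRingHom ℚ)))
    (hnn : ∀ k : ℕ, 0 ≤ PowerSeries.coeff (R := ℚ) k (seriesOf f q))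
    (hsub : Filter.limsup
        (fun n : ℕ => ((PowerSeries.coeff (R := ℚ) (n + m) (seriesOf f q) : ℚ) : ℝ) ^ ((n : ℝ)⁻¹))
        Filter.atTop ≤ 1) :
    ∀ z : ℂ, (q.map (Int.castRingHom ℂ)).IsRoot z → ∃ j : ℕ, 0 < j ∧ z ^ j = 1 := by
  have hge := root_norm_ge f q m hq0 hcop hnn hsub
  obtain ⟨hnorm1, hlead⟩ := root_norm_eq_one q hq0 hge
  intro z hz
  -- z is integral over ℤ
  have halg : algebraMap ℤ ℂ = Int.castRingHom ℂ := rfl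
  have hzint : IsIntegral ℤ z := by
    rcases hlead with h | h
    · exact ⟨q, h, by rw [halg, ← Polynomial.eval_map]; exact hz⟩
    · refine ⟨-q, ?_, ?_⟩
      · unfold Polynomial.Monic
        rw [Polynomial.leadingCoeff_neg, h, neg_neg]
      · rw [halg, ← Polynomial.eval_map, Polynomial.map_neg, Polynomial.eval_neg,
          hz, neg_zero]
  have hzintQ : IsIntegral ℚ z := hzint.tower_top
  haveI : FiniteDimensional ℚ ℚ⟮z⟯ := IntermediateField.adjoin.finiteDimensional hzintQ
  haveI : NumberField ℚ⟮z⟯ := ⟨⟩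
  set x : ℚ⟮z⟯ := IntermediateField.AdjoinSimple.gen ℚ z with hx_def
  have hx : algebraMap ℚ⟮z⟯ ℂ x = z := IntermediateField.AdjoinSimple.algebraMap_gen ℚ z
  have hKinj : Function.Injective (algebraMap ℚ⟮z⟯ ℂ) := (algebraMap ℚ⟮z⟯ ℂ).injective
  have hxint : IsIntegral ℤ x := by
    rw [← isIntegral_algebraMap_iff hKinj, hx]
    exact hzint
  have hxroot : Polynomial.eval₂ (Int.castRingHom ℚ⟮z⟯) x q = 0 := by
    apply hKinj
    rw [map_zero, Polynomial.hom_eval₂,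
      Subsingleton.elim ((algebraMap ℚ⟮z⟯ ℂ).comp (Int.castRingHom ℚ⟮z⟯)) (Int.castRingHom ℂ),
      hx, ← Polynomial.eval_map]
    exact hz
  have hconj : ∀ φ : ℚ⟮z⟯ →+* ℂ, ‖φ x‖ = 1 := by
    intro φ
    apply hnorm1
    show (q.map (Int.castRingHom ℂ)).eval (φ x) = 0
    rw [Polynomial.eval_map,
      ← Subsingleton.elim (φ.comp (Int.castRingHom ℚ⟮z⟯)) (Int.castRingHom ℂ),
      ← Polynomial.hom_eval₂, hxroot, map_zero]
  obtain ⟨n, hn, hxn⟩ := NumberField.Embeddings.pow_eq_one_of_norm_eq_one ℚ⟮z⟯ ℂ hxint hconj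
  exact ⟨n, hn, by rw [← hx, ← map_pow, hxn, map_one]⟩
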